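/- For every real y ≥ 0, π·erfc(−y)² − 2·e^{−y²}·√π·y·erfc(−y) − 2·e^{−2y²} ≥ π − 2, i.e., the function y ↦ π·erfc(−y)² − 2·e^{−y²}·√π·y·erfc(−y) − 2·e^{−2y²} is nondecreasing on [0,∞) with value π−2 at y = 0. -/

import Mathlib

open Real MeasureTheory

/-- erfc(x) = (2/√π)·∫_x^∞ e^{−t²} dt -/
noncomputable def erfc (x : ℝ) : ℝ := (2 / Real.sqrt Real.pi) * ∫ t in Set.Ioi x, Real.exp (-t ^ 2)

lemma gauss_integrable : Integrable (fun t : ℝ => Real.exp (-t ^ 2)) := by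
  simpa using integrable_exp_neg_mul_sq (b := 1) one_pos

lemma ioi_eq (x : ℝ) :
    (∫ t in Set.Ioi x, Real.exp (-t ^ 2))
      = Real.sqrt Real.pi / 2 - ∫ t in (0:ℝ)..x, Real.exp (-t ^ 2) := by
  have hI := gauss_integrable
  have h0 : (∫ t in Set.Iic (0:ℝ), Real.exp (-t ^ 2))
      + (∫ t in Set.Ioi (0:ℝ), Real.exp (-t ^ 2)) = ∫ t : ℝ, Real.exp (-t ^ 2) :=
    intervalIntegral.integral_Iic_add_Ioi hI.integrableOn hI.integrableOn
  have hx : (∫ t in Set.Iic x, Real.exp (-t ^ 2))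
      + (∫ t in Set.Ioi x, Real.exp (-t ^ 2)) = ∫ t : ℝ, Real.exp (-t ^ 2) :=
    intervalIntegral.integral_Iic_add_Ioi hI.integrableOn hI.integrableOn
  have hsub : (∫ t in Set.Iic x, Real.exp (-t ^ 2))
      - (∫ t in Set.Iic (0:ℝ), Real.exp (-t ^ 2)) = ∫ t in (0:ℝ)..x, Real.exp (-t ^ 2) :=
    intervalIntegral.integral_Iic_sub_Iic hI.integrableOn hI.integrableOn
  have hg : (∫ t in Set.Ioi (0:ℝ), Real.exp (-t ^ 2)) = Real.sqrt Real.pi / 2 := by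
    simpa using integral_gaussian_Ioi 1
  linarith

lemma erfc_eq (x : ℝ) :
    erfc x = 1 - (2 / Real.sqrt Real.pi) * ∫ t in (0:ℝ)..x, Real.exp (-t ^ 2) := by
  have hpi : Real.sqrt Real.pi ≠ 0 := by positivity
  rw [erfc, ioi_eq, mul_sub]
  congr 1
  field_simp

lemma erfc_nonneg (x : ℝ) : 0 ≤ erfc x := by
  rw [erfc]
  have h1 : (0:ℝ) ≤ 2 / Real.sqrt Real.pi := by positivity
  have h2 : (0:ℝ) ≤ ∫ t in Set.Ioi x, Real.exp (-t ^ 2) :=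
    integral_nonneg fun t => (Real.exp_pos _).le
  positivity

lemma hasDerivAt_G (y : ℝ) :
    HasDerivAt (fun u : ℝ => ∫ t in (0:ℝ)..u, Real.exp (-t ^ 2))
      (Real.exp (-y ^ 2)) y := by
  have hc : Continuous fun t : ℝ => Real.exp (-t ^ 2) := by continuity
  exact intervalIntegral.integral_hasDerivAt_right
    (hc.intervalIntegrable _ _)
    (hc.stronglyMeasurableAtFilter _ _)
    hc.continuousAt

lemma hasDerivAt_E (y : ℝ) :
    HasDerivAt (fun u : ℝ => erfc (-u)) (2 / Real.sqrt Real.pi * Real.exp (-y ^ 2)) y := by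
  have h1 : HasDerivAt (fun u : ℝ => ∫ t in (0:ℝ)..(-u), Real.exp (-t ^ 2))
      (Real.exp (-y ^ 2) * (-1)) y := by
    have := (hasDerivAt_G (-y)).comp y (hasDerivAt_neg y)
    simpa [neg_pow, Function.comp_def] using this
  have h2 : HasDerivAt (fun u : ℝ =>
      1 - (2 / Real.sqrt Real.pi) * ∫ t in (0:ℝ)..(-u), Real.exp (-t ^ 2))
      (0 - 2 / Real.sqrt Real.pi * (Real.exp (-y ^ 2) * (-1))) y :=
    (hasDerivAt_const y (1:ℝ)).sub (h1.const_mul _)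
  have h3 : (fun u : ℝ => erfc (-u)) = fun u : ℝ =>
      1 - (2 / Real.sqrt Real.pi) * ∫ t in (0:ℝ)..(-u), Real.exp (-t ^ 2) := by
    funext u; exact erfc_eq (-u)
  rw [h3]
  convert h2 using 1
  ring

lemma hasDerivAt_F (y : ℝ) :
    HasDerivAt (fun u : ℝ =>
      Real.pi * (erfc (-u)) ^ 2 - 2 * Real.exp (-u ^ 2) * Real.sqrt Real.pi * u * erfc (-u)
        - 2 * Real.exp (-2 * u ^ 2))
      (2 * Real.sqrt Real.pi * Real.exp (-y ^ 2) * (1 + 2 * y ^ 2) * erfc (-y)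
        + 4 * y * Real.exp (-2 * y ^ 2)) y := by
  have hE := hasDerivAt_E y
  have hexp1 : HasDerivAt (fun u : ℝ => Real.exp (-u ^ 2))
      (Real.exp (-y ^ 2) * (-2 * y)) y := by
    have h : HasDerivAt (fun u : ℝ => -u ^ 2) (-2 * y) y := by
      have := ((hasDerivAt_pow 2 y)).neg
      simpa [Pi.neg_def] using this.congr_deriv (by ring)
    exact (Real.hasDerivAt_exp _).comp y h
  have hexp2 : HasDerivAt (fun u : ℝ => Real.exp (-2 * u ^ 2))
      (Real.exp (-2 * y ^ 2) * (-4 * y)) y := by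
    have h : HasDerivAt (fun u : ℝ => -2 * u ^ 2) (-4 * y) y := by
      have := (hasDerivAt_pow 2 y).const_mul (-2 : ℝ)
      simpa using this.congr_deriv (by ring)
    exact (Real.hasDerivAt_exp _).comp y h
  have hD : HasDerivAt (fun u : ℝ =>
      Real.pi * (erfc (-u)) ^ 2 - 2 * Real.exp (-u ^ 2) * Real.sqrt Real.pi * u * erfc (-u)
        - 2 * Real.exp (-2 * u ^ 2))
      (Real.pi * (2 * erfc (-y) * (2 / Real.sqrt Real.pi * Real.exp (-y ^ 2)))
        - (((2 * (Real.exp (-y ^ 2) * (-2 * y)) * Real.sqrt Real.pi * y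
              + 2 * Real.exp (-y ^ 2) * Real.sqrt Real.pi * 1) * erfc (-y))
            + 2 * Real.exp (-y ^ 2) * Real.sqrt Real.pi * y
              * (2 / Real.sqrt Real.pi * Real.exp (-y ^ 2)))
        - 2 * (Real.exp (-2 * y ^ 2) * (-4 * y))) y := by
    refine HasDerivAt.sub (HasDerivAt.sub ?_ ?_) (hexp2.const_mul 2)
    · have := (hE.fun_pow 2).const_mul Real.pi
      refine this.congr_deriv ?_
      norm_num
    · exact (((hexp1.const_mul 2).mul_const (Real.sqrt Real.pi)).mul
        (hasDerivAt_id y)).mul hE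
  convert hD using 1
  have hpi : Real.sqrt Real.pi ≠ 0 := by positivity
  have hsq : Real.sqrt Real.pi * Real.sqrt Real.pi = Real.pi :=
    Real.mul_self_sqrt Real.pi_pos.le
  rw [show (-2:ℝ) * y ^ 2 = -y ^ 2 + -y ^ 2 by ring, Real.exp_add]
  field_simp
  linear_combination (4 * erfc (-y)) * hsq

theorem stmt9 :
    (∀ y : ℝ, 0 ≤ y →
      Real.pi * (erfc (-y)) ^ 2 - 2 * Real.exp (-y ^ 2) * Real.sqrt Real.pi * y * erfc (-y)
        - 2 * Real.exp (-2 * y ^ 2) ≥ Real.pi - 2) ∧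
    MonotoneOn (fun y : ℝ =>
      Real.pi * (erfc (-y)) ^ 2 - 2 * Real.exp (-y ^ 2) * Real.sqrt Real.pi * y * erfc (-y)
        - 2 * Real.exp (-2 * y ^ 2)) (Set.Ici (0 : ℝ)) ∧
    Real.pi * (erfc (-(0:ℝ))) ^ 2 - 2 * Real.exp (-(0:ℝ) ^ 2) * Real.sqrt Real.pi * 0 * erfc (-(0:ℝ))
        - 2 * Real.exp (-2 * (0:ℝ) ^ 2) = Real.pi - 2 := by
  set F : ℝ → ℝ := fun y =>
    Real.pi * (erfc (-y)) ^ 2 - 2 * Real.exp (-y ^ 2) * Real.sqrt Real.pi * y * erfc (-y)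
      - 2 * Real.exp (-2 * y ^ 2) with hF
  have hzero : F 0 = Real.pi - 2 := by
    have h0 : erfc (-(0:ℝ)) = 1 := by
      rw [neg_zero, erfc_eq]
      simp
    simp only [hF, h0]
    norm_num
  have hmono : MonotoneOn F (Set.Ici (0:ℝ)) := by
    have hdiff : ∀ y : ℝ, DifferentiableAt ℝ F y := fun y =>
      (hasDerivAt_F y).differentiableAt
    apply monotoneOn_of_deriv_nonneg (convex_Ici 0)
      (fun y _ => (hdiff y).continuousAt.continuousWithinAt)
      (fun y _ => (hdiff y).differentiableWithinAt)
    intro y hy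
    rw [interior_Ici] at hy
    have hy0 : 0 < y := hy
    rw [(hasDerivAt_F y).deriv]
    have h1 : 0 ≤ erfc (-y) := erfc_nonneg (-y)
    have h2 : (0:ℝ) < Real.exp (-y ^ 2) := Real.exp_pos _
    have h3 : (0:ℝ) < Real.exp (-2 * y ^ 2) := Real.exp_pos _
    have h4 : (0:ℝ) ≤ Real.sqrt Real.pi := Real.sqrt_nonneg _
    positivity
  refine ⟨?_, hmono, hzero⟩
  intro y hy
  have := hmono (Set.self_mem_Ici) hy hy
  rw [hzero] at this
  exact this
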